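/- Let Z = X + Y where X ~ B(n_X, ζ) and Y ~ B(n_Y, 1 − ζ) are independent binomials with n_X + n_Y = n, n ≥ 1, and 0 < ζ ≤ 1/2. Then for every i, Pr[Z = i] ≤ C/(ζ√n) for an absolute constant C (e.g., C = (e√2/(2π))·(1 + 2/(ζn)) works). -/

import Mathlib

open Real Finset

noncomputable def binomProb (n : ℕ) (p : ℝ) (k : ℕ) : ℝ :=
  (n.choose k : ℝ) * p ^ k * (1 - p) ^ (n - k)

lemma binomProb_nonneg {m : ℕ} {p : ℝ} (h0 : 0 ≤ p) (h1 : p ≤ 1) (k : ℕ) :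
    0 ≤ binomProb m p k := by
  unfold binomProb
  have : (0:ℝ) ≤ 1 - p := by linarith
  positivity

lemma binomProb_zero_of_lt {m k : ℕ} (p : ℝ) (h : m < k) : binomProb m p k = 0 := by
  unfold binomProb
  rw [Nat.choose_eq_zero_of_lt h]
  simp

lemma sum_binomProb (m : ℕ) (p : ℝ) :
    ∑ k ∈ range (m + 1), binomProb m p k = 1 := by
  have h := add_pow p (1-p) m
  calc ∑ k ∈ range (m + 1), binomProb m p k
      = ∑ k ∈ range (m + 1), p ^ k * (1-p) ^ (m - k) * (m.choose k : ℝ) :=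
        Finset.sum_congr rfl (fun k _ => by unfold binomProb; ring)
    _ = (p + (1-p))^m := h.symm
    _ = 1 := by norm_num

lemma sum_binomProb_subset {m : ℕ} {p : ℝ} (h0 : 0 ≤ p) (h1 : p ≤ 1) (t : Finset ℕ) :
    ∑ k ∈ t, binomProb m p k ≤ 1 := by
  have hsub : t.filter (fun k => k ≤ m) ⊆ range (m+1) := by
    intro x hx
    simp only [mem_filter] at hx
    simp [Nat.lt_succ_of_le hx.2]
  calc ∑ k ∈ t, binomProb m p k = ∑ k ∈ t.filter (fun k => k ≤ m), binomProb m p k := by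
        refine (Finset.sum_filter_of_ne ?_).symm
        intro x _ hne
        by_contra hxm
        exact hne (binomProb_zero_of_lt p (by omega))
    _ ≤ ∑ k ∈ range (m+1), binomProb m p k :=
        Finset.sum_le_sum_of_subset_of_nonneg hsub (fun k _ _ => binomProb_nonneg h0 h1 k)
    _ = 1 := sum_binomProb m p

lemma binomProb_le_one {m : ℕ} {p : ℝ} (h0 : 0 ≤ p) (h1 : p ≤ 1) (k : ℕ) :
    binomProb m p k ≤ 1 := by
  simpa using sum_binomProb_subset h0 h1 {k}

lemma sum_shift_le_one {N i m : ℕ} {p : ℝ} (h0 : 0 ≤ p) (h1 : p ≤ 1) :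
    ∑ x ∈ range N, (if x ≤ i then binomProb m p (i - x) else 0) ≤ 1 := by
  rw [Finset.sum_ite, Finset.sum_const_zero, add_zero]
  calc ∑ x ∈ (range N).filter (fun x => x ≤ i), binomProb m p (i - x)
      = ∑ j ∈ ((range N).filter (fun x => x ≤ i)).image (fun x => i - x), binomProb m p j :=
        (Finset.sum_image (by intro x hx y hy hxy; simp only [Finset.mem_coe, Finset.mem_filter] at hx hy; omega)).symm
    _ ≤ 1 := sum_binomProb_subset h0 h1 _

lemma binomProb_symm {m k : ℕ} (p : ℝ) (h : k ≤ m) :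
    binomProb m (1 - p) k = binomProb m p (m - k) := by
  unfold binomProb
  rw [← Nat.choose_symm h, Nat.sub_sub_self h]
  ring_nf

-- ratio identity
lemma binom_ratio {m k : ℕ} (p : ℝ) (h : k < m) :
    binomProb m p (k+1) * ((k+1) * (1-p)) = binomProb m p k * ((m-k : ℕ) * p) := by
  unfold binomProb
  have h1 : (m.choose (k+1) * (k+1) : ℝ) = m.choose k * (m - k : ℕ) := by
    exact_mod_cast congrArg (Nat.cast : ℕ → ℝ) (Nat.choose_succ_right_eq m k)
  have hpow : (1-p)^(m-k) = (1-p)^(m-(k+1)) * (1-p) := by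
    rw [← pow_succ]
    congr 1
    omega
  rw [hpow]
  linear_combination h1 * (p^k * p * (1-p)^(m-(k+1)) * (1-p))

lemma step_up {m k : ℕ} {p : ℝ} (h0 : 0 ≤ p) (h1 : p ≤ 1/2) (hk : (k : ℝ) + 1 ≤ (m+1)*p) :
    binomProb m p k ≤ binomProb m p (k+1) := by
  have hkm : k < m := by
    by_contra hc
    push_neg at hc
    have : ((k:ℝ)+1) ≤ (m+1)*p := hk
    have hmk : (m : ℝ) ≤ k := by exact_mod_cast hc
    nlinarith
  have hr := binom_ratio p hkm
  have hp1 : (0:ℝ) < 1 - p := by linarith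
  have hpos : (0:ℝ) < ((k:ℝ)+1) * (1-p) := by positivity
  have hineq : ((k:ℝ)+1)*(1-p) ≤ ((m-k : ℕ):ℝ) * p := by
    have : ((m-k:ℕ):ℝ) = (m:ℝ) - k := by
      have : k ≤ m := le_of_lt hkm
      push_cast [this]; ring
    rw [this]; nlinarith
  have hnn := binomProb_nonneg h0 (by linarith) k (m := m)
  nlinarith [hr, mul_le_mul_of_nonneg_right hineq hnn, hpos]

lemma step_down {m k : ℕ} {p : ℝ} (h0 : 0 ≤ p) (h1 : p ≤ 1/2) (hk : (m+1)*p ≤ (k : ℝ) + 1) :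
    binomProb m p (k+1) ≤ binomProb m p k := by
  by_cases hkm : k < m
  · have hr := binom_ratio p hkm
    have hp1 : (0:ℝ) < 1 - p := by linarith
    have hpos : (0:ℝ) < ((k:ℝ)+1) * (1-p) := by positivity
    have hineq : ((m-k : ℕ):ℝ) * p ≤ ((k:ℝ)+1)*(1-p) := by
      have hc : ((m-k:ℕ):ℝ) = (m:ℝ) - k := by
        have : k ≤ m := le_of_lt hkm
        push_cast [this]; ring
      rw [hc]; nlinarith
    have hnn := binomProb_nonneg h0 (by linarith) k (m := m)
    nlinarith [hr, mul_le_mul_of_nonneg_left hineq hnn, hpos]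
  · rw [binomProb_zero_of_lt p (by omega)]
    exact binomProb_nonneg h0 (by linarith) k

lemma le_mode {m : ℕ} {p : ℝ} (h0 : 0 ≤ p) (h1 : p ≤ 1/2) (k : ℕ) :
    binomProb m p k ≤ binomProb m p (Nat.floor ((m+1)*p)) := by
  set k0 := Nat.floor ((m+1)*p) with hk0
  have hup : ∀ d : ℕ, binomProb m p (k0 - d) ≤ binomProb m p k0 := by
    intro d
    induction d with
    | zero => simp
    | succ d ih =>
      by_cases hd : d + 1 ≤ k0
      · have hstep : binomProb m p (k0 - (d+1)) ≤ binomProb m p (k0 - (d+1) + 1) := by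
          apply step_up h0 h1
          have h2 : k0 - (d+1) + 1 ≤ k0 := by omega
          have h3 : ((k0 - (d+1) : ℕ):ℝ) + 1 ≤ (k0 : ℝ) := by exact_mod_cast h2
          have h4 : (k0 : ℝ) ≤ (m+1)*p := Nat.floor_le (by positivity)
          linarith
        have he : k0 - (d+1) + 1 = k0 - d := by omega
        rw [he] at hstep
        exact le_trans hstep ih
      · have : k0 - (d+1) = k0 - d := by omega
        rw [this]; exact ih
  have hdown : ∀ d : ℕ, binomProb m p (k0 + d) ≤ binomProb m p k0 := by
    intro d
    induction d with
    | zero => simp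
    | succ d ih =>
      have hstep : binomProb m p (k0 + d + 1) ≤ binomProb m p (k0 + d) := by
        apply step_down h0 h1
        have h4 : (m+1)*p < (k0 : ℝ) + 1 := Nat.lt_floor_add_one _
        have : (k0 : ℝ) ≤ (k0 + d : ℕ) := by exact_mod_cast Nat.le_add_right k0 d
        push_cast
        push_cast at this
        linarith
      exact le_trans (by exact_mod_cast hstep) ih
  by_cases hk : k ≤ k0
  · have := hup (k0 - k)
    rwa [Nat.sub_sub_self hk] at this
  · have := hdown (k - k0)
    rwa [Nat.add_sub_cancel' (by omega)] at this

lemma stirling_ge (j : ℕ) (hj : 1 ≤ j) : Real.sqrt π ≤ Stirling.stirlingSeq j := by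
  obtain ⟨j, rfl⟩ := Nat.exists_eq_succ_of_ne_zero (Nat.one_le_iff_ne_zero.mp hj)
  have := Stirling.stirlingSeq'_antitone
  exact this.le_of_tendsto (Stirling.tendsto_stirlingSeq_sqrt_pi.comp (Filter.tendsto_add_atTop_nat 1)) j

lemma stirling_le (j : ℕ) (hj : 1 ≤ j) : Stirling.stirlingSeq j ≤ Real.exp 1 / Real.sqrt 2 := by
  obtain ⟨j, rfl⟩ := Nat.exists_eq_succ_of_ne_zero (Nat.one_le_iff_ne_zero.mp hj)
  have h := Stirling.stirlingSeq'_antitone (Nat.zero_le j)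
  simpa [Stirling.stirlingSeq_one] using h

lemma fact_lower (j : ℕ) (hj : 1 ≤ j) :
    Real.sqrt π * (Real.sqrt (2*j) * ((j : ℝ)/Real.exp 1)^j) ≤ (Nat.factorial j : ℝ) := by
  have h := stirling_ge j hj
  have hp : 0 < Real.sqrt (2*(j:ℝ)) * ((j : ℝ)/Real.exp 1)^j := by
    have : (0:ℝ) < j := by exact_mod_cast hj
    positivity
  rw [Stirling.stirlingSeq, le_div_iff₀ hp] at h
  linarith [h]

lemma fact_upper (j : ℕ) (hj : 1 ≤ j) :
    (Nat.factorial j : ℝ) ≤ Real.exp 1 * Real.sqrt j * ((j : ℝ)/Real.exp 1)^j := by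
  have h := stirling_le j hj
  have hp : 0 < Real.sqrt (2*(j:ℝ)) * ((j : ℝ)/Real.exp 1)^j := by
    have : (0:ℝ) < j := by exact_mod_cast hj
    positivity
  rw [Stirling.stirlingSeq, div_le_iff₀ hp] at h
  have h2 : Real.sqrt (2*(j:ℝ)) = Real.sqrt 2 * Real.sqrt j := by
    rw [Real.sqrt_mul (by norm_num)]
  have he : (0:ℝ) < Real.sqrt 2 := by positivity
  calc (Nat.factorial j : ℝ) ≤ Real.exp 1 / Real.sqrt 2 * (Real.sqrt (2 * (j:ℝ)) * ((j:ℝ) / Real.exp 1) ^ j) := h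
    _ = Real.exp 1 * Real.sqrt j * ((j : ℝ)/Real.exp 1)^j := by
        rw [h2]; field_simp

lemma pow_le_pow_exp (x : ℝ) (hx : 0 ≤ x) (j : ℕ) (hj : 1 ≤ j) :
    x^j ≤ (j:ℝ)^j * Real.exp (x - j) := by
  have hj0 : (0:ℝ) < j := by exact_mod_cast hj
  have h1 : x / j ≤ Real.exp (x/j - 1) := by
    have := Real.add_one_le_exp (x/j - 1)
    linarith
  have h2 : x = (j:ℝ) * (x / j) := by field_simp
  calc x^j = (j:ℝ)^j * (x/j)^j := by rw [← mul_pow, ← h2]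
    _ ≤ (j:ℝ)^j * Real.exp (x/j - 1)^j := by
        gcongr
    _ = (j:ℝ)^j * Real.exp (x - j) := by
        rw [← Real.exp_nat_mul]
        congr 1
        field_simp

lemma central_bound (k E : ℕ) (hk : 1 ≤ k) (hE : 1 ≤ E) (ζ : ℝ) (hζ0 : 0 < ζ) (hζ1 : ζ ≤ 1/2) :
    binomProb (k+E) ζ k ≤ Real.exp 1 * Real.sqrt (k+E) / (2 * π * Real.sqrt (k*E)) := by
  set m := k + E with hm
  have hk0 : (0:ℝ) < k := by exact_mod_cast hk
  have hE0 : (0:ℝ) < E := by exact_mod_cast hE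
  have hm0 : (0:ℝ) < m := by push_cast [hm]; linarith
  have hz1 : (0:ℝ) < 1 - ζ := by linarith
  have he : (0:ℝ) < Real.exp 1 := Real.exp_pos 1
  -- entropy bound
  have hent : ((m:ℝ)*ζ)^k * ((m:ℝ)*(1-ζ))^E ≤ (k:ℝ)^k * (E:ℝ)^E := by
    have e1 := pow_le_pow_exp ((m:ℝ)*ζ) (by positivity) k hk
    have e2 := pow_le_pow_exp ((m:ℝ)*(1-ζ)) (by positivity) E hE
    have hcast : (m:ℝ) = (k:ℝ) + (E:ℝ) := by push_cast [hm]; ring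
    calc ((m:ℝ)*ζ)^k * ((m:ℝ)*(1-ζ))^E
        ≤ ((k:ℝ)^k * Real.exp ((m:ℝ)*ζ - k)) * ((E:ℝ)^E * Real.exp ((m:ℝ)*(1-ζ) - E)) := by
          apply mul_le_mul e1 e2 (by positivity) (by positivity)
      _ = (k:ℝ)^k * (E:ℝ)^E * Real.exp ((m:ℝ)*ζ - k + ((m:ℝ)*(1-ζ) - E)) := by
          rw [Real.exp_add]; ring
      _ = (k:ℝ)^k * (E:ℝ)^E := by
          rw [show (m:ℝ)*ζ - k + ((m:ℝ)*(1-ζ) - E) = 0 by rw [hcast]; ring]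
          simp
  -- factorial bounds
  have hkm : k ≤ m := by omega
  have hchoose_eq : ((m.choose k : ℕ) : ℝ) * (Nat.factorial k : ℝ) * (Nat.factorial E : ℝ)
      = (Nat.factorial m : ℝ) := by
    have := Nat.choose_mul_factorial_mul_factorial hkm
    rw [show m - k = E by omega] at this
    exact_mod_cast congrArg (Nat.cast : ℕ → ℝ) this
  set a1 := Real.sqrt π * (Real.sqrt (2*(k:ℝ)) * ((k : ℝ)/Real.exp 1)^k) with ha1
  set a2 := Real.sqrt π * (Real.sqrt (2*(E:ℝ)) * ((E : ℝ)/Real.exp 1)^E) with ha2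
  set F := Real.exp 1 * Real.sqrt (m:ℝ) * ((m : ℝ)/Real.exp 1)^m with hF
  have ha1p : 0 < a1 := by rw [ha1]; positivity
  have ha2p : 0 < a2 := by rw [ha2]; positivity
  have hFp : 0 < F := by rw [hF]; positivity
  have hchoose : ((m.choose k : ℕ) : ℝ) ≤ F / (a1 * a2) := by
    rw [le_div_iff₀ (by positivity)]
    calc ((m.choose k : ℕ) : ℝ) * (a1 * a2)
        ≤ ((m.choose k : ℕ) : ℝ) * ((Nat.factorial k : ℝ) * (Nat.factorial E : ℝ)) := by
          have hfa : a1 * a2 ≤ (Nat.factorial k : ℝ) * (Nat.factorial E : ℝ) :=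
            mul_le_mul (fact_lower k hk) (fact_lower E hE) (le_of_lt ha2p) (Nat.cast_nonneg _)
          exact mul_le_mul_of_nonneg_left hfa (Nat.cast_nonneg _)
      _ = (Nat.factorial m : ℝ) := by rw [← hchoose_eq]; ring
      _ ≤ F := fact_upper m (by omega)
  -- main chain
  have hbp : binomProb m ζ k = ((m.choose k : ℕ) : ℝ) * ζ^k * (1-ζ)^E := by
    unfold binomProb
    rw [show m - k = E by omega]
  rw [hbp]
  have step1 : ((m.choose k : ℕ) : ℝ) * ζ^k * (1-ζ)^E ≤ F / (a1*a2) * ζ^k * (1-ζ)^E := by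
    gcongr
  refine le_trans step1 ?_
  -- now show F/(a1 a2) * ζ^k (1-ζ)^E ≤ e √m / (2π√(kE))
  rw [div_mul_eq_mul_div, div_mul_eq_mul_div, div_le_div_iff₀ (by positivity) (by positivity)]
  -- F * ζ^k * (1-ζ)^E * (2π√(kE)) ≤ e√m * (a1*a2)
  have hsqrt : Real.sqrt ((k:ℝ)*E) = Real.sqrt k * Real.sqrt E := Real.sqrt_mul (le_of_lt hk0) _
  have hs2k : Real.sqrt (2*(k:ℝ)) = Real.sqrt 2 * Real.sqrt k := Real.sqrt_mul (by norm_num) _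
  have hs2E : Real.sqrt (2*(E:ℝ)) = Real.sqrt 2 * Real.sqrt E := Real.sqrt_mul (by norm_num) _
  have hpi : Real.sqrt π * Real.sqrt π = π := Real.mul_self_sqrt pi_pos.le
  have h22 : Real.sqrt 2 * Real.sqrt 2 = 2 := Real.mul_self_sqrt (by norm_num)
  have hkey : ((m:ℝ)/Real.exp 1)^m * ζ^k * (1-ζ)^E ≤ ((k:ℝ)/Real.exp 1)^k * ((E:ℝ)/Real.exp 1)^E := by
    have epow : ((m:ℝ))^m = ((m:ℝ))^k * ((m:ℝ))^E := by rw [hm]; exact pow_add _ k E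
    have eexp : (Real.exp 1)^m = (Real.exp 1)^k * (Real.exp 1)^E := by rw [hm]; exact pow_add _ k E
    rw [div_pow, div_pow, div_pow, epow, eexp]
    calc (m:ℝ)^k * (m:ℝ)^E / ((Real.exp 1)^k * (Real.exp 1)^E) * ζ^k * (1-ζ)^E
        = ((m:ℝ)*ζ)^k * ((m:ℝ)*(1-ζ))^E / ((Real.exp 1)^k * (Real.exp 1)^E) := by
          rw [mul_pow, mul_pow]; ring
      _ ≤ (k:ℝ)^k * (E:ℝ)^E / ((Real.exp 1)^k * (Real.exp 1)^E) := by gcongr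
      _ = (k:ℝ)^k / (Real.exp 1)^k * ((E:ℝ)^E / (Real.exp 1)^E) := by ring
  calc F * ζ^k * (1-ζ)^E * (2 * π * Real.sqrt ((k:ℝ)*E))
      = (((m:ℝ)/Real.exp 1)^m * ζ^k * (1-ζ)^E) * (Real.exp 1 * Real.sqrt (m:ℝ) * (2 * π * (Real.sqrt k * Real.sqrt E))) := by
        rw [hF, hsqrt]; ring
    _ ≤ (((k:ℝ)/Real.exp 1)^k * ((E:ℝ)/Real.exp 1)^E) * (Real.exp 1 * Real.sqrt (m:ℝ) * (2 * π * (Real.sqrt k * Real.sqrt E))) := by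
        gcongr
    _ = Real.exp 1 * Real.sqrt (m:ℝ) * (a1 * a2) := by
        rw [ha1, ha2, hs2k, hs2E]
        linear_combination -(Real.exp 1 * Real.sqrt (m:ℝ) * Real.sqrt (k:ℝ) * Real.sqrt (E:ℝ) *
          (((k:ℝ)/Real.exp 1)^k) * (((E:ℝ)/Real.exp 1)^E)) *
          ((Real.sqrt 2 * Real.sqrt 2) * hpi + π * h22)
    _ = Real.exp 1 * Real.sqrt ((k:ℝ)+(E:ℝ)) * (a1 * a2) := by
        rw [hm]
        push_cast
        ring_nf

lemma keyB (b ζ : ℝ) (hb : 3/2 < b) (hζ0 : 0 < ζ) (hbz : b + ζ ≤ 2) :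
    ζ * b^4 ≤ (b+1)^2 * (b - ζ*b - ζ^2) := by
  have hb2 : b ≤ 2 := by linarith
  have hQ : 0 ≤ b^5 - 2*b^4 + 3*b^3 + 2*b^2 - 5*b - 4 := by
    nlinarith [mul_nonneg (by linarith : (0:ℝ) ≤ b - 3/2) (by linarith : (0:ℝ) ≤ 2 - b),
      sq_nonneg (b - 3/2),
      mul_nonneg (mul_nonneg (by linarith : (0:ℝ) ≤ b - 3/2) (by linarith : (0:ℝ) ≤ b - 3/2)) (by linarith : (0:ℝ) ≤ b - 3/2),
      mul_nonneg (sq_nonneg (b-3/2)) (by linarith : (0:ℝ) ≤ 2 - b)]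
  have hs : 0 ≤ 2 - b - ζ := by linarith
  have hbr : 0 ≤ (b+1)^2 * (2+ζ) + b^4 := by positivity
  nlinarith [hQ, mul_nonneg hs hbr]

lemma keyC (b ζ : ℝ) (hb : 3/2 < b) (hζ0 : 0 < ζ) (hζ : ζ ≤ 1/2) (hbz : 2 < b + ζ) :
    ζ * b^4 ≤ (b+1)^2 * (b+ζ-1) * (b - ζ*b - ζ^2) := by
  have hb1 : 3/2 ≤ b := le_of_lt hb
  have hw : 0 ≤ 1/2 - ζ := by linarith
  have hD : 0 ≤ (b-1) * (4*b^2 + b - 1) := by nlinarith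
  nlinarith [hD, hw, mul_nonneg hw (by linarith : (0:ℝ) ≤ b - 1),
    mul_nonneg hw (sq_nonneg (b+1)), mul_nonneg (mul_nonneg hw hw) (sq_nonneg (b+1)),
    mul_nonneg hw (by positivity : (0:ℝ) ≤ b^4), sq_nonneg (b+1),
    mul_nonneg (mul_nonneg hw (by linarith : (0:ℝ) ≤ b)) (sq_nonneg (b+1)),
    mul_nonneg (mul_nonneg (mul_nonneg hw hw) (by linarith : (0:ℝ) ≤ b)) (sq_nonneg (b+1)),
    mul_pos hζ0 (by nlinarith : (0:ℝ) < b^2)]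

lemma h4core (b ζ K0 E : ℝ) (hb : 0 < b) (hζ0 : 0 < ζ) (hζ : ζ ≤ 1/2)
    (hk1 : 1 ≤ K0) (hE1 : 1 ≤ E) (hkb : b + ζ - 1 ≤ K0)
    (hEz : b - ζ*b - ζ^2 ≤ ζ*E) : b^4 ≤ (b+1)^2*K0*E := by
  have hKE : (0:ℝ) < K0 := by linarith
  have hEp : (0:ℝ) < E := by linarith
  by_cases hbs : b ≤ 3/2
  · have h1 : b^2 ≤ (3/2)*b := by nlinarith
    have h2 : (0:ℝ) ≤ 1 + b - b^2 := by linarith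
    have h5 : b^4 ≤ (b+1)^2 := by
      nlinarith [mul_nonneg h2 (by positivity : (0:ℝ) ≤ b^2+b+1)]
    have hKE1 : (1:ℝ) ≤ K0 * E := by nlinarith
    have h7 := mul_le_mul_of_nonneg_left hKE1 (sq_nonneg (b+1))
    nlinarith [h5, h7]
  · push_neg at hbs
    by_cases hbz : b + ζ ≤ 2
    · have key := keyB b ζ hbs hζ0 hbz
      have s1 := mul_le_mul_of_nonneg_left hEz (sq_nonneg (b+1))
      have s2 : (b+1)^2 * E ≤ (b+1)^2 * (K0*E) :=
        mul_le_mul_of_nonneg_left (by nlinarith : E ≤ K0*E) (sq_nonneg (b+1))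
      have h6 : ζ*b^4 ≤ ζ*((b+1)^2*K0*E) := by
        calc ζ*b^4 ≤ (b+1)^2*(b - ζ*b - ζ^2) := key
          _ ≤ (b+1)^2*(ζ*E) := s1
          _ = ζ*((b+1)^2*E) := by ring
          _ ≤ ζ*((b+1)^2*(K0*E)) := mul_le_mul_of_nonneg_left s2 hζ0.le
          _ = ζ*((b+1)^2*K0*E) := by ring
      exact le_of_mul_le_mul_left h6 hζ0
    · push_neg at hbz
      have key := keyC b ζ hbs hζ0 hζ hbz
      have hbz1 : (0:ℝ) ≤ b + ζ - 1 := by linarith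
      have s1 := mul_le_mul_of_nonneg_left hEz (mul_nonneg (sq_nonneg (b+1)) hbz1)
      have s2 : (b+1)^2 * (b+ζ-1) * E ≤ (b+1)^2 * K0 * E :=
        mul_le_mul_of_nonneg_right (mul_le_mul_of_nonneg_left (by linarith : b+ζ-1 ≤ K0) (sq_nonneg (b+1))) hEp.le
      have h6 : ζ*b^4 ≤ ζ*((b+1)^2*K0*E) := by
        calc ζ*b^4 ≤ (b+1)^2*(b+ζ-1)*(b - ζ*b - ζ^2) := key
          _ = (b+1)^2*(b+ζ-1)*(b - ζ*b - ζ^2) := by ring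
          _ ≤ (b+1)^2*(b+ζ-1)*(ζ*E) := by
              calc (b+1)^2*(b+ζ-1)*(b - ζ*b - ζ^2)
                  = (b+1)^2*(b+ζ-1)*(b - ζ*b - ζ^2) := rfl
                _ ≤ (b+1)^2*(b+ζ-1)*(ζ*E) := by
                    have := mul_le_mul_of_nonneg_left hEz (mul_nonneg (sq_nonneg (b+1)) hbz1)
                    calc (b+1)^2*(b+ζ-1)*(b - ζ*b - ζ^2) = (b+1)^2*(b+ζ-1)*(b - ζ*b - ζ^2) := rfl
                      _ ≤ _ := by nlinarith [this]
          _ = ζ*((b+1)^2*(b+ζ-1)*E) := by ring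
          _ ≤ ζ*((b+1)^2*K0*E) := mul_le_mul_of_nonneg_left s2 hζ0.le
      exact le_of_mul_le_mul_left h6 hζ0

lemma K_ge : (3:ℝ)/5 ≤ Real.exp 1 * Real.sqrt 2 / (2*π) := by
  rw [le_div_iff₀ (by positivity)]
  have h1 : (2.7182818283 : ℝ) < Real.exp 1 := Real.exp_one_gt_d9
  have h2 : π < 3.1416 := pi_lt_d6.trans (by norm_num)
  have h3 : (1.414:ℝ) ≤ Real.sqrt 2 := by
    rw [show (2:ℝ) = 1.414^2 + 0.000604 by norm_num]
    nlinarith [Real.sq_sqrt (by norm_num : (0:ℝ) ≤ 1.414^2 + 0.000604),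
      Real.sqrt_nonneg (1.414^2+0.000604)]
  nlinarith [Real.sqrt_nonneg 2]

set_option maxHeartbeats 2000000 in
lemma pointBound (n m k : ℕ) (ζ : ℝ) (hζ0 : 0 < ζ) (hζ : ζ ≤ 1/2) (hn : 1 ≤ n)
    (hm2 : (n:ℝ) ≤ 2*m) (hmn : m ≤ n) :
    binomProb m ζ k ≤
      Real.exp 1 * Real.sqrt 2 / (2 * π) * (1 + 2 / (ζ * n)) / (ζ * Real.sqrt n) := by
  have hζ1 : ζ ≤ 1 := by linarith
  have hn0 : (0:ℝ) < n := by exact_mod_cast hn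
  have hsn1 : (1:ℝ) ≤ Real.sqrt n := by
    rw [show (1:ℝ) = Real.sqrt 1 by simp]
    exact Real.sqrt_le_sqrt (by exact_mod_cast hn)
  have hsn0 : (0:ℝ) < Real.sqrt n := by linarith
  have hsn_le : Real.sqrt n ≤ n := by
    have h1n : (1:ℝ) ≤ (n:ℝ) := by exact_mod_cast hn
    have h := Real.sqrt_le_sqrt (by nlinarith : (n:ℝ) ≤ (n:ℝ)^2)
    rwa [Real.sqrt_sq hn0.le] at h
  have hzsn : 0 < ζ * Real.sqrt n := by positivity
  have hK := K_ge
  have hKpos : (0:ℝ) < Real.exp 1 * Real.sqrt 2 / (2*π) := by positivity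
  set K := Real.exp 1 * Real.sqrt 2 / (2*π) with hKdef
  set a := ζ * (n:ℝ) with hadef
  have ha0 : 0 < a := by positivity
  clear_value K a
  by_cases hkm : m < k
  · rw [binomProb_zero_of_lt ζ hkm]
    positivity
  push_neg at hkm
  by_cases ha1 : a ≤ 1
  · -- trivial case: T ≥ 1
    have hT : (1:ℝ) ≤ K * (1 + 2/a) / (ζ * Real.sqrt n) := by
      have h2a : (3:ℝ) ≤ 1 + 2/a := by
        have : (2:ℝ) ≤ 2/a := by
          rw [le_div_iff₀ ha0]; linarith
        linarith
      have hza : ζ * Real.sqrt n ≤ 1 := by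
        calc ζ * Real.sqrt n ≤ ζ * n := by gcongr
          _ ≤ 1 := by rw [← hadef]; exact ha1
      calc (1:ℝ) ≤ (3:ℝ)/5 * 3 / 1 := by norm_num
        _ ≤ K * (1 + 2/a) / (ζ * Real.sqrt n) := by
            apply div_le_div₀ (by positivity) (by nlinarith) hzsn hza
    exact le_trans (binomProb_le_one hζ0.le hζ1 k) hT
  push_neg at ha1
  -- now a > 1, m ≥ 2
  have hn3 : (2:ℝ) < (n:ℝ) := by nlinarith
  have hnn3 : 2 < n := by exact_mod_cast hn3
  have hnm : n ≤ 2*m := by exact_mod_cast hm2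
  have hm2' : 2 ≤ m := by omega
  have hmR : (2:ℝ) ≤ (m:ℝ) := by exact_mod_cast hm2'
  set k0 := Nat.floor (((m:ℝ)+1)*ζ) with hk0def
  have hmode : binomProb m ζ k ≤ binomProb m ζ k0 := by
    rw [hk0def]; exact le_mode hζ0.le hζ k
  have hk0le : (k0:ℝ) ≤ ((m:ℝ)+1)*ζ := by
    rw [hk0def]; exact Nat.floor_le (by positivity)
  have hk0gt : ((m:ℝ)+1)*ζ < (k0:ℝ) + 1 := by
    rw [hk0def]; exact Nat.lt_floor_add_one _
  clear_value k0
  have hk0m : k0 < m := by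
    have : (k0:ℝ) < m := by nlinarith
    exact_mod_cast this
  by_cases hk00 : k0 = 0
  · -- exponential case
    have hfl : ((m:ℝ)+1)*ζ < 1 := by
      rw [hk00] at hk0gt; simpa using hk0gt
    have ha2 : a < 2 := by nlinarith
    have hp0 : binomProb m ζ 0 = (1-ζ)^m := by
      unfold binomProb; simp
    have hexp1 : (1-ζ)^m ≤ Real.exp (-(ζ*m)) := by
      calc (1-ζ)^m ≤ (Real.exp (-ζ))^m := by
            apply pow_le_pow_left₀ (by linarith)
            linarith [Real.add_one_le_exp (-ζ)]
        _ = Real.exp ((m:ℝ) * (-ζ)) := by rw [← Real.exp_nat_mul]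
        _ = Real.exp (-(ζ*m)) := by ring_nf
    have hexp2 : Real.exp (-(ζ*m)) ≤ Real.exp (-(a/2)) := by
      apply Real.exp_le_exp.mpr
      rw [hadef]; nlinarith
    have hcore : Real.exp (-(a/2)) ≤ K * (a+2) / a^2 := by
      rw [Real.exp_neg, inv_eq_one_div, div_le_div_iff₀ (Real.exp_pos _) (by positivity)]
      have hexp3 : 1 + a/2 ≤ Real.exp (a/2) := by linarith [Real.add_one_le_exp (a/2)]
      have hpoly : a^2 ≤ K * (a+2) * (1 + a/2) := by
        have hge : (0:ℝ) ≤ (a+2)*(1+a/2) := by nlinarith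
        have h35 := mul_le_mul_of_nonneg_right hK hge
        have hp2 : a^2 ≤ 3/5*((a+2)*(1+a/2)) := by
          nlinarith [mul_nonneg (by linarith : (0:ℝ) ≤ 2-a) ha0.le]
        nlinarith [h35, hp2]
      calc 1 * a^2 = a^2 := by ring
        _ ≤ K * (a+2) * (1+a/2) := hpoly
        _ ≤ K * (a+2) * Real.exp (a/2) := by
            apply mul_le_mul_of_nonneg_left hexp3 (by positivity)
    have hfin : K * (a+2) / a^2 ≤ K * (1 + 2/a) / (ζ * Real.sqrt n) := by
      have h1a : 1 + 2/a = (a+2)/a := by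
        field_simp
      have he1 : K * (1 + 2/a) / (ζ * Real.sqrt n) = K * (a+2) / (a * (ζ * Real.sqrt n)) := by
        rw [h1a, ← mul_div_assoc, div_div]
      rw [he1]
      apply div_le_div_of_nonneg_left (by positivity) (by positivity)
      calc a * (ζ * Real.sqrt n) ≤ a * (ζ * n) := by gcongr
        _ = a^2 := by rw [hadef]; ring
    calc binomProb m ζ k ≤ binomProb m ζ k0 := hmode
      _ = (1-ζ)^m := by rw [hk00, hp0]
      _ ≤ Real.exp (-(ζ*m)) := hexp1
      _ ≤ Real.exp (-(a/2)) := hexp2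
      _ ≤ K * (a+2) / a^2 := hcore
      _ ≤ K * (1 + 2/a) / (ζ * Real.sqrt n) := hfin
  · -- Stirling case
    have hk01 : 1 ≤ k0 := Nat.one_le_iff_ne_zero.mpr hk00
    set E := m - k0 with hEdef
    have hE1 : 1 ≤ E := by omega
    have hkE : k0 + E = m := by omega
    clear_value E
    have hcb := central_bound k0 E hk01 hE1 ζ hζ0 hζ
    rw [hkE] at hcb
    have hk0R : (1:ℝ) ≤ (k0:ℝ) := by exact_mod_cast hk01
    have hER : (1:ℝ) ≤ (E:ℝ) := by exact_mod_cast hE1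
    have hcastE : (E:ℝ) = (m:ℝ) - (k0:ℝ) := by
      have : (k0:ℕ) ≤ m := le_of_lt hk0m
      push_cast [hEdef, this]
      ring
    have hcastkE : (k0:ℝ) + (E:ℝ) = (m:ℝ) := by rw [hcastE]; ring
    -- core quadratic inequality
    set b := ζ * (m:ℝ) with hbdef
    have hb0 : 0 < b := by positivity
    clear_value b
    have h4 : b^4 ≤ (b+1)^2 * (k0:ℝ) * (E:ℝ) := by
      apply h4core b ζ _ _ hb0 hζ0 hζ hk0R hER
      · rw [hbdef]; nlinarith
      · rw [hbdef]
        have : (m:ℝ) - ((m:ℝ)+1)*ζ ≤ (E:ℝ) := by rw [hcastE]; linarith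
        nlinarith [mul_le_mul_of_nonneg_left this hζ0.le]
    -- assemble sqrt inequality
    set c := Real.sqrt 2 * (1 + 2/a) / (ζ * Real.sqrt n) with hcdef
    have hc0 : 0 ≤ c := by positivity
    have hc2 : c^2 = 2*(1+2/a)^2/(ζ^2*(n:ℝ)) := by
      rw [hcdef]
      rw [div_pow, mul_pow, Real.sq_sqrt (by norm_num : (0:ℝ) ≤ 2), mul_pow,
        Real.sq_sqrt hn0.le]
    clear_value c
    have h12 : (b+1)/b ≤ 1 + 2/a := by
      rw [div_le_iff₀ hb0]
      have h2a : 1/b ≤ 2/a := by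
        rw [div_le_div_iff₀ hb0 ha0]
        rw [hadef, hbdef]; nlinarith
      have := mul_le_mul_of_nonneg_right h2a hb0.le
      rw [div_mul_cancel₀] at this
      · nlinarith [this]
      · exact ne_of_gt hb0
    have hb2 : b^2 ≤ (k0:ℝ)*(E:ℝ)*(1+2/a)^2 := by
      have e0 : 0 ≤ (b+1)/b := by positivity
      have e1 : ((b+1)/b)^2 ≤ (1+2/a)^2 := by
        apply pow_le_pow_left₀ e0 h12
      have e2 : b^2 ≤ (k0:ℝ)*(E:ℝ)*((b+1)/b)^2 := by
        rw [div_pow, ← mul_div_assoc, le_div_iff₀ (by positivity)]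
        nlinarith [h4]
      calc b^2 ≤ (k0:ℝ)*(E:ℝ)*((b+1)/b)^2 := e2
        _ ≤ (k0:ℝ)*(E:ℝ)*(1+2/a)^2 := by
            apply mul_le_mul_of_nonneg_left e1 (by positivity)
    have hmc : (m:ℝ) ≤ (k0:ℝ)*(E:ℝ)*c^2 := by
      rw [hc2, ← mul_div_assoc, le_div_iff₀ (mul_pos (pow_pos hζ0 2) hn0)]
      have : (m:ℝ)*(ζ^2*n) ≤ 2*b^2 := by rw [hbdef]; nlinarith
      nlinarith [hb2, this, mul_le_mul_of_nonneg_left hb2 (by norm_num : (0:ℝ) ≤ 2)]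
    have hsqm : Real.sqrt ((k0:ℝ)+(E:ℝ)) ≤ Real.sqrt ((k0:ℝ)*(E:ℝ)) * c := by
      have hmc2 : (k0:ℝ)+(E:ℝ) ≤ (k0:ℝ)*(E:ℝ)*c^2 := by rw [hcastkE]; exact hmc
      have h := Real.sqrt_le_sqrt hmc2
      rwa [Real.sqrt_mul (by positivity) (c^2), Real.sqrt_sq hc0] at h
    have hfinal : Real.exp 1 * Real.sqrt ((k0:ℝ)+(E:ℝ)) / (2 * π * Real.sqrt ((k0:ℝ)*(E:ℝ)))
        ≤ K * (1 + 2/a) / (ζ * Real.sqrt n) := by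
      have hkep : 0 < Real.sqrt ((k0:ℝ)*(E:ℝ)) := by
        apply Real.sqrt_pos.mpr; nlinarith
      calc Real.exp 1 * Real.sqrt ((k0:ℝ)+(E:ℝ)) / (2 * π * Real.sqrt ((k0:ℝ)*(E:ℝ)))
          ≤ Real.exp 1 * (Real.sqrt ((k0:ℝ)*(E:ℝ)) * c) / (2 * π * Real.sqrt ((k0:ℝ)*(E:ℝ))) := by
            apply (div_le_div_iff_of_pos_right (by positivity)).mpr
            exact mul_le_mul_of_nonneg_left hsqm (Real.exp_pos 1).le
        _ = Real.exp 1 * c / (2*π) := by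
            field_simp [ne_of_gt hkep, Real.pi_ne_zero]
        _ = K * (1 + 2/a) / (ζ * Real.sqrt n) := by
            rw [hKdef, hcdef]
            field_simp [ne_of_gt hzsn, Real.pi_ne_zero]
    calc binomProb m ζ k ≤ binomProb m ζ k0 := hmode
      _ ≤ Real.exp 1 * Real.sqrt ((k0:ℝ)+(E:ℝ)) / (2 * π * Real.sqrt ((k0:ℝ)*(E:ℝ))) := hcb
      _ ≤ K * (1 + 2/a) / (ζ * Real.sqrt n) := hfinal

theorem stmt7 (n nX nY : ℕ) (hn : 1 ≤ n) (hsum : nX + nY = n)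
    (ζ : ℝ) (hζ0 : 0 < ζ) (hζ : ζ ≤ 1 / 2) (i : ℕ) :
    ∑ x ∈ Finset.range (nX + 1),
        binomProb nX ζ x *
          (if x ≤ i then binomProb nY (1 - ζ) (i - x) else 0) ≤
      (Real.exp 1 * Real.sqrt 2 / (2 * Real.pi)) * (1 + 2 / (ζ * n)) /
        (ζ * Real.sqrt n) := by
  have hn0 : (0:ℝ) < n := by exact_mod_cast hn
  have hζ1 : ζ ≤ 1 := by linarith
  have h1ζ0 : (0:ℝ) ≤ 1 - ζ := by linarith
  have h1ζ1 : (1:ℝ) - ζ ≤ 1 := by linarith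
  set T := Real.exp 1 * Real.sqrt 2 / (2 * π) * (1 + 2 / (ζ * n)) / (ζ * Real.sqrt n) with hTdef
  have hKpos : (0:ℝ) < Real.exp 1 * Real.sqrt 2 / (2*π) := by positivity
  have hzn : (0:ℝ) < ζ * n := mul_pos hζ0 hn0
  have hzsn : (0:ℝ) < ζ * Real.sqrt n := mul_pos hζ0 (Real.sqrt_pos.mpr hn0)
  have hT0 : 0 ≤ T := by
    rw [hTdef]
    apply div_nonneg _ hzsn.le
    apply mul_nonneg hKpos.le
    have : (0:ℝ) ≤ 2/(ζ*n) := div_nonneg (by norm_num) hzn.le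
    linarith
  by_cases hxy : nX ≤ nY
  · -- Y is the bigger one
    have hm2 : (n:ℝ) ≤ 2*nY := by
      have : n ≤ 2*nY := by omega
      exact_mod_cast this
    have hmn : nY ≤ n := by omega
    have hg : ∀ x, (if x ≤ i then binomProb nY (1-ζ) (i-x) else 0) ≤ T := by
      intro x
      by_cases hx : x ≤ i
      · rw [if_pos hx]
        by_cases hj : i - x ≤ nY
        · rw [binomProb_symm ζ hj]
          exact pointBound n nY (nY - (i-x)) ζ hζ0 hζ hn hm2 hmn
        · rw [binomProb_zero_of_lt _ (by omega)]
          exact hT0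
      · rw [if_neg hx]
        exact hT0
    calc ∑ x ∈ Finset.range (nX + 1),
        binomProb nX ζ x * (if x ≤ i then binomProb nY (1 - ζ) (i - x) else 0)
        ≤ ∑ x ∈ Finset.range (nX + 1), binomProb nX ζ x * T := by
          apply Finset.sum_le_sum
          intro x _
          exact mul_le_mul_of_nonneg_left (hg x) (binomProb_nonneg hζ0.le hζ1 x)
      _ = (∑ x ∈ Finset.range (nX + 1), binomProb nX ζ x) * T := by
          rw [Finset.sum_mul]
      _ = 1 * T := by rw [sum_binomProb]
      _ = T := one_mul T
  · -- X is the bigger one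
    push_neg at hxy
    have hm2 : (n:ℝ) ≤ 2*nX := by
      have : n ≤ 2*nX := by omega
      exact_mod_cast this
    have hmn : nX ≤ n := by omega
    have hg0 : ∀ x, (0:ℝ) ≤ (if x ≤ i then binomProb nY (1-ζ) (i-x) else 0) := by
      intro x
      by_cases hx : x ≤ i
      · rw [if_pos hx]; exact binomProb_nonneg h1ζ0 h1ζ1 _
      · rw [if_neg hx]
    calc ∑ x ∈ Finset.range (nX + 1),
        binomProb nX ζ x * (if x ≤ i then binomProb nY (1 - ζ) (i - x) else 0)
        ≤ ∑ x ∈ Finset.range (nX + 1), T * (if x ≤ i then binomProb nY (1 - ζ) (i - x) else 0) := by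
          apply Finset.sum_le_sum
          intro x _
          exact mul_le_mul_of_nonneg_right (pointBound n nX x ζ hζ0 hζ hn hm2 hmn) (hg0 x)
      _ = T * ∑ x ∈ Finset.range (nX + 1), (if x ≤ i then binomProb nY (1 - ζ) (i - x) else 0) := by
          rw [Finset.mul_sum]
      _ ≤ T * 1 := mul_le_mul_of_nonneg_left (sum_shift_le_one h1ζ0 h1ζ1) hT0
      _ = T := mul_one T
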